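/- Let w = γ_1...γ_m be an alternating string of length m ≥ 1 on (Q(n), I(n)), and define f_w : {0,...,m} → {0,...,n} by f_w(0) = s(γ_m) and f_w(j) = t(γ_{m-j+1}) for j ∈ {1,...,m}. Then f_w is strictly monotone; moreover f_w is strictly increasing if and only if f_{w*} is strictly decreasing, where w* denotes the formal inverse walk γ_m* ... γ_1*. -/

import Mathlib

/-!  Combinatorics of walks and strings on the quiver `Q(n)` with relations `I(n)`.

`Q(n)` has vertices `0,…,n` and arrows `α i : i+1 → i` and `β i : i → i+1`
for `0 ≤ i ≤ n-1`.  A letter is an arrow or a formal inverse of an arrow. -/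

/-- A letter of a walk on `Q(n)`: an arrow `α i` or `β i`, or a formal
inverse `α i *` (`ia i`) or `β i *` (`ib i`). -/
inductive Letter where
  | a (i : ℕ)   -- the arrow `α i : i+1 → i`
  | b (i : ℕ)   -- the arrow `β i : i → i+1`
  | ia (i : ℕ)  -- the formal inverse of `α i`
  | ib (i : ℕ)  -- the formal inverse of `β i`
  deriving DecidableEq

namespace Letter

/-- The `*`-operation on letters (formal inversion). -/
def star : Letter → Letter
  | a i => ia i
  | ia i => a i
  | b i => ib i
  | ib i => b i

/-- Source of a letter. -/
def src : Letter → ℕ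
  | a i => i + 1
  | ia i => i
  | b i => i
  | ib i => i + 1

/-- Target of a letter. -/
def tgt : Letter → ℕ
  | a i => i
  | ia i => i + 1
  | b i => i + 1
  | ib i => i

/-- Whether a letter is an honest arrow of `Q(n)` (not a formal inverse). -/
def honest : Letter → Bool
  | a _ => true
  | b _ => true
  | ia _ => false
  | ib _ => false

/-- Whether a letter is a letter of the quiver `Q(n)` (arrows `α i, β i` only
exist for `i < n`). -/
def valid (n : ℕ) : Letter → Prop
  | a i => i < n
  | b i => i < n
  | ia i => i < n
  | ib i => i < n

end Letter

open Letter

/-- A walk `γ₁γ₂…γₘ` on `Q(n)`, encoded as the list `[γ₁, …, γₘ]`: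
all letters exist in `Q(n)` and `t (γ_{k+1}) = s (γ_k)` for consecutive letters. -/
def IsWalk (n : ℕ) (w : List Letter) : Prop :=
  (∀ c ∈ w, c.valid n) ∧ w.Chain' (fun c d => d.tgt = c.src)

/-- A walk is reduced if no letter is immediately followed by its formal inverse:
`γ_k ≠ γ_{k+1}*`. -/
def IsReducedWalk (w : List Letter) : Prop :=
  w.Chain' (fun c d => c ≠ d.star)

/-- The formal inverse `w* = γₘ* … γ₁*` of a walk `w = γ₁…γₘ`. -/
def starWalk (w : List Letter) : List Letter :=
  (w.map Letter.star).reverse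

/-- The source `s(w) = s(γₘ)` of a (nonempty) walk. -/
def walkSrc (w : List Letter) : ℕ := (w.getLastD (Letter.a 0)).src

/-- The function `f_w : {0,…,m} → {0,…,n}` attached to a walk `w = γ₁…γₘ`:
`f_w 0 = s(γₘ)` and `f_w j = t(γ_{m-j+1})` for `1 ≤ j ≤ m`. -/
def fW (w : List Letter) (j : ℕ) : ℕ :=
  if j = 0 then (w.getLastD (Letter.a 0)).src
  else ((w.getD (w.length - j) (Letter.a 0))).tgt

/-- The target `t(w) = t(γ₁)` of a (nonempty) walk. -/
def walkTgt (w : List Letter) : ℕ := fW w w.length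

/-- The length-two paths which are monomials appearing in the generators of the
ideal `I(n)`: `α i · α (i+1)`, `β (i+1) · β i`, `α j · β j` (coming from `α 0 β 0`
and from the binomial relations `β i α i - α (i+1) β (i+1)`, `0 ≤ i ≤ n-2`), and
`β i · α i` for `0 ≤ i ≤ n-2`.  A pair `(x, y)` stands for the path `x y`
(first traverse `y`, then `x`). -/
def ForbiddenPair (n : ℕ) (x y : Letter) : Prop :=
  (∃ i, x = Letter.a i ∧ y = Letter.a (i + 1)) ∨
  (∃ i, x = Letter.b (i + 1) ∧ y = Letter.b i) ∨
  (∃ j, x = Letter.a j ∧ y = Letter.b j) ∨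
  (∃ i, i + 2 ≤ n ∧ x = Letter.b i ∧ y = Letter.a i)

/-- A string on `(Q(n), I(n))`: a reduced walk such that no path contained in it
(i.e. no contiguous subword of `w` consisting of honest arrows, and no formal
inverse of such a subword) is a monomial appearing in a generator of `I(n)`.
Since all monomials appearing in the generators of `I(n)` have length two, this
amounts to forbidding the pairs of `ForbiddenPair` in both orientations. -/
def IsString (n : ℕ) (w : List Letter) : Prop :=
  IsWalk n w ∧ IsReducedWalk w ∧
    ∀ x y : Letter, [x, y] <:+: w →
      ¬ ForbiddenPair n x y ∧ ¬ ForbiddenPair n y.star x.star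

/-- An alternating walk: `γ_k` is an honest arrow iff `γ_{k+1}` is a formal
inverse, for all `k < m`. -/
def IsAlternating (w : List Letter) : Prop :=
  w.Chain' (fun c d => c.honest = !d.honest)

/-- A path on `Q(n)`: a walk all of whose letters are honest arrows. -/
def IsPath (n : ℕ) (p : List Letter) : Prop :=
  IsWalk n p ∧ ∀ c ∈ p, c.honest = true

/-- The `h`-fold concatenation `w^h` of a walk with itself. -/
def powWalk (w : List Letter) (h : ℕ) : List Letter :=
  (List.replicate h w).flatten


namespace Letter

/-- Direction of a letter: `true` if it goes up (`b i`, `ia i`), `false` if down. -/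
def dir : Letter → Bool
  | b _ => true
  | ia _ => true
  | _ => false

lemma dir_star (c : Letter) : c.star.dir = !c.dir := by cases c <;> rfl
lemma tgt_of_dir_true {c : Letter} (h : c.dir = true) : c.tgt = c.src + 1 := by
  cases c <;> simp_all [dir, src, tgt]
lemma src_of_dir_false {c : Letter} (h : c.dir = false) : c.src = c.tgt + 1 := by
  cases c <;> simp_all [dir, src, tgt]

lemma dir_eq_of_adj {c d : Letter} (h1 : d.tgt = c.src) (h2 : c ≠ d.star)
    (h3 : c.honest = !d.honest) : c.dir = d.dir := by
  cases c <;> cases d <;> simp_all [tgt, src, star, honest, dir]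

end Letter

lemma dir_chain {w : List Letter} (hc : w.Chain' (fun c d => d.tgt = c.src))
    (hred : w.Chain' (fun c d => c ≠ d.star))
    (halt : w.Chain' (fun c d => c.honest = !d.honest)) :
    w.Chain' (fun c d => c.dir = d.dir) := by
  simp only [List.Chain'] at hc hred halt ⊢
  rw [List.isChain_iff_getElem] at hc hred halt ⊢
  exact fun i h => Letter.dir_eq_of_adj (hc i h) (hred i h) (halt i h)

lemma dir_const {w : List Letter} (h : w.Chain' (fun c d => c.dir = d.dir)) :
    ∃ u, ∀ c ∈ w, c.dir = u := by
  rcases w with _ | ⟨c, l⟩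
  · exact ⟨true, by simp⟩
  refine ⟨c.dir, ?_⟩
  have key : ∀ i (hi : i < (c :: l).length), (c :: l)[i].dir = c.dir := by
    intro i hi
    induction i with
    | zero => rfl
    | succ k ih =>
      simp only [List.Chain'] at h
      rw [List.isChain_iff_getElem] at h
      have h2 := h k (by simpa using hi)
      rw [← h2]
      exact ih (by omega)
  intro x hx
  obtain ⟨i, hi, rfl⟩ := List.getElem_of_mem hx
  exact key i hi

lemma fW_step {w : List Letter} (hc : w.Chain' (fun c d => d.tgt = c.src))
    {j : ℕ} (hj : j < w.length) :
    fW w j = (w.getD (w.length - 1 - j) (Letter.a 0)).src ∧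
    fW w (j + 1) = (w.getD (w.length - 1 - j) (Letter.a 0)).tgt := by
  have hlen : 0 < w.length := by omega
  constructor
  · rcases Nat.eq_zero_or_pos j with rfl | hjpos
    · show (w.getLastD _).src = _
      rw [List.getLastD_eq_getLast?, List.getLast?_eq_getElem?,
        List.getElem?_eq_getElem (by omega : w.length - 1 < w.length),
        List.getD_eq_getElem _ _ (by omega : w.length - 1 - 0 < w.length)]
      rfl
    · rw [fW, if_neg (by omega : j ≠ 0)]
      simp only [List.Chain'] at hc
      rw [List.isChain_iff_getElem] at hc
      have h2 := hc (w.length - 1 - j) (by omega)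
      rw [List.getD_eq_getElem _ _ (by omega : w.length - j < w.length),
        List.getD_eq_getElem _ _ (by omega : w.length - 1 - j < w.length)]
      have : w.length - 1 - j + 1 = w.length - j := by omega
      convert h2 using 3
      omega
  · rw [fW, if_neg (by omega : j + 1 ≠ 0)]
    have : w.length - (j + 1) = w.length - 1 - j := by omega
    rw [this]

lemma fW_formula {w : List Letter} (hc : w.Chain' (fun c d => d.tgt = c.src))
    {u : Bool} (hdir : ∀ c ∈ w, c.dir = u) :
    ∀ j ≤ w.length, (u = true → fW w j = fW w 0 + j) ∧
      (u = false → fW w j + j = fW w 0) := by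
  intro j
  induction j with
  | zero => simp
  | succ k ih =>
    intro hk
    obtain ⟨e1, e2⟩ := fW_step hc (by omega : k < w.length)
    set e := w.getD (w.length - 1 - k) (Letter.a 0) with he
    have hmem : e ∈ w := by
      rw [he, List.getD_eq_getElem _ _ (by omega : w.length - 1 - k < w.length)]
      exact List.getElem_mem _
    have hd := hdir e hmem
    obtain ⟨ih1, ih2⟩ := ih (by omega)
    constructor
    · intro hu
      rw [e2, Letter.tgt_of_dir_true (hd.trans hu), ← e1, ih1 hu]; omega
    · intro hu
      have h3 := Letter.src_of_dir_false (hd.trans hu)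
      rw [← e1, ← e2] at h3
      have h4 := ih2 hu
      omega

lemma star_chain {w : List Letter} (hc : w.Chain' (fun c d => d.tgt = c.src)) :
    (starWalk w).Chain' (fun c d => d.tgt = c.src) := by
  unfold starWalk
  simp only [List.Chain'] at hc ⊢
  rw [List.isChain_reverse, List.isChain_map]
  refine hc.imp fun {c d} h => ?_
  show (Letter.star c).tgt = (Letter.star d).src
  cases c <;> cases d <;> simp_all [Letter.tgt, Letter.src, Letter.star]


/-- for an alternating string `w = γ₁…γₘ` of length `m ≥ 1` on
`(Q(n), I(n))`, the function `f_w` is strictly monotone on `{0,…,m}`; moreover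
`f_w` is strictly increasing iff `f_{w*}` is strictly decreasing. -/
theorem stmt_2 (n : ℕ) (w : List Letter) (hw : IsString n w) (halt : IsAlternating w)
    (hm : 1 ≤ w.length) :
    (StrictMonoOn (fW w) (Set.Iic w.length) ∨ StrictAntiOn (fW w) (Set.Iic w.length)) ∧
    (StrictMonoOn (fW w) (Set.Iic w.length) ↔
      StrictAntiOn (fW (starWalk w)) (Set.Iic (starWalk w).length)) := by
  obtain ⟨⟨_, hc⟩, hred, _⟩ := hw
  obtain ⟨u, hu⟩ := dir_const (dir_chain hc hred halt)
  have hsc := star_chain hc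
  have hsu : ∀ c ∈ starWalk w, c.dir = !u := by
    intro c hcmem
    simp only [starWalk, List.mem_reverse, List.mem_map] at hcmem
    obtain ⟨d, hd, rfl⟩ := hcmem
    rw [Letter.dir_star, hu d hd]
  have hslen : (starWalk w).length = w.length := by simp [starWalk]
  have hf := fW_formula hc hu
  have hfs := fW_formula hsc hsu
  cases u with
  | true =>
    have hmono : StrictMonoOn (fW w) (Set.Iic w.length) := by
      intro x hx y hy hxy
      have h1 := (hf x (Set.mem_Iic.mp hx)).1 rfl
      have h2 := (hf y (Set.mem_Iic.mp hy)).1 rfl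
      omega
    have hanti : StrictAntiOn (fW (starWalk w)) (Set.Iic (starWalk w).length) := by
      intro x hx y hy hxy
      have h1 := (hfs x (Set.mem_Iic.mp hx)).2 rfl
      have h2 := (hfs y (Set.mem_Iic.mp hy)).2 rfl
      omega
    exact ⟨Or.inl hmono, iff_of_true hmono hanti⟩
  | false =>
    have hanti : StrictAntiOn (fW w) (Set.Iic w.length) := by
      intro x hx y hy hxy
      have h1 := (hf x (Set.mem_Iic.mp hx)).2 rfl
      have h2 := (hf y (Set.mem_Iic.mp hy)).2 rfl
      omega
    have h1 := (hf 1 hm).2 rfl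
    have hs1 := (hfs 1 (by omega)).1 rfl
    refine ⟨Or.inr hanti, iff_of_false ?_ ?_⟩
    · intro h
      have := h (Set.mem_Iic.mpr (Nat.zero_le _)) (Set.mem_Iic.mpr hm) Nat.one_pos
      omega
    · intro h
      have := h (Set.mem_Iic.mpr (Nat.zero_le _)) (Set.mem_Iic.mpr (by omega)) Nat.one_pos
      omega
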